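/- Let F : ℝⁿ → ℝⁿ be globally Lipschitz with constant L, F(0) = 0, and suppose ‖F(x)‖ ≥ m‖x‖^β for all x, where m, β > 0. Let V : ℝⁿ → ℝ be continuously differentiable with k₁‖x‖² ≤ V(x) ≤ k₂‖x‖² and ⟨∇V(x), F(x)⟩ ≤ -k₃‖x‖² for all x, where k₁, k₂, k₃ > 0. Fix η₁, η₂, λ₂ > 0 and λ₁ ∈ (0,1), and define σ(x) = η₁‖F(x)‖^{-λ₁} + η₂‖F(x)‖^{λ₂} when F(x) ≠ 0 and σ(x) = 0 otherwise. Then for all x with F(x) ≠ 0, ⟨∇V(x), σ(x)F(x)⟩ ≤ -c₁·V(x)^{α₁} - c₂·V(x)^{α₂}, where α₁ = 1 - λ₁/2, α₂ = 1 + βλ₂/2, c₁ = k₃η₁/(L^{λ₁} k₂^{α₁}), and c₂ = k₃η₂ m^{λ₂}/k₂^{α₂}. -/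

import Mathlib

open scoped RealInnerProductSpace

theorem scaled_lyapunov_fixed_time {n : ℕ}
    (F : EuclideanSpace ℝ (Fin n) → EuclideanSpace ℝ (Fin n))
    (V : EuclideanSpace ℝ (Fin n) → ℝ)
    (gradV : EuclideanSpace ℝ (Fin n) → EuclideanSpace ℝ (Fin n))
    (L m β k₁ k₂ k₃ η₁ η₂ lam₁ lam₂ : ℝ)
    (hL : 0 < L) (hm : 0 < m) (hβ : 0 < β)
    (hk₁ : 0 < k₁) (hk₂ : 0 < k₂) (hk₃ : 0 < k₃)
    (hη₁ : 0 < η₁) (hη₂ : 0 < η₂) (hlam₂ : 0 < lam₂)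
    (hlam₁0 : 0 < lam₁) (hlam₁1 : lam₁ < 1)
    (hLip : LipschitzWith L.toNNReal F) (hF0 : F 0 = 0)
    (hFlow : ∀ x, m * ‖x‖ ^ β ≤ ‖F x‖)
    (hgrad : ∀ x, HasGradientAt V (gradV x) x)
    (hgradCont : Continuous gradV)
    (hVlow : ∀ x, k₁ * ‖x‖ ^ 2 ≤ V x) (hVup : ∀ x, V x ≤ k₂ * ‖x‖ ^ 2)
    (hdec : ∀ x, ⟪gradV x, F x⟫ ≤ -k₃ * ‖x‖ ^ 2) :
    ∀ x, F x ≠ 0 →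
      ⟪gradV x, (η₁ * ‖F x‖ ^ (-lam₁) + η₂ * ‖F x‖ ^ lam₂) • F x⟫ ≤
        -(k₃ * η₁ / (L ^ lam₁ * k₂ ^ (1 - lam₁ / 2))) * V x ^ (1 - lam₁ / 2)
        - (k₃ * η₂ * m ^ lam₂ / k₂ ^ (1 + β * lam₂ / 2)) * V x ^ (1 + β * lam₂ / 2) := by
  intro x hFx
  have hx : x ≠ 0 := by rintro rfl; exact hFx hF0
  have hr0 : (0:ℝ) < ‖x‖ := norm_pos_iff.mpr hx
  have hf0 : (0:ℝ) < ‖F x‖ := norm_pos_iff.mpr hFx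
  have hV0 : 0 ≤ V x := le_trans (by positivity) (hVlow x)
  have hFle : ‖F x‖ ≤ L * ‖x‖ := by
    have h := hLip.dist_le_mul x 0
    rw [hF0, dist_zero_right, dist_zero_right] at h
    simpa [Real.coe_toNNReal L hL.le] using h
  have hα₁pos : 0 < 1 - lam₁ / 2 := by linarith
  have hα₂pos : 0 < 1 + β * lam₂ / 2 := by positivity
  -- rewrite ‖x‖^2 as rpow
  have hr2 : (‖x‖:ℝ) ^ (2:ℕ) = ‖x‖ ^ (2:ℝ) := by
    rw [← Real.rpow_natCast ‖x‖ 2]; norm_num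
  -- first bound : V^α₁ ≤ k₂^α₁ * ‖x‖^(2-lam₁)
  have hVb1 : V x ^ (1 - lam₁ / 2) ≤ k₂ ^ (1 - lam₁ / 2) * ‖x‖ ^ (2 - lam₁) := by
    calc V x ^ (1 - lam₁ / 2) ≤ (k₂ * ‖x‖ ^ 2) ^ (1 - lam₁ / 2) :=
          Real.rpow_le_rpow hV0 (hVup x) hα₁pos.le
      _ = k₂ ^ (1 - lam₁ / 2) * (‖x‖ ^ (2:ℝ)) ^ (1 - lam₁ / 2) := by
          rw [Real.mul_rpow hk₂.le (by positivity), hr2]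
      _ = k₂ ^ (1 - lam₁ / 2) * ‖x‖ ^ (2 - lam₁) := by
          rw [← Real.rpow_mul hr0.le]; ring_nf
  have hVb2 : V x ^ (1 + β * lam₂ / 2) ≤ k₂ ^ (1 + β * lam₂ / 2) * ‖x‖ ^ (2 + β * lam₂) := by
    calc V x ^ (1 + β * lam₂ / 2) ≤ (k₂ * ‖x‖ ^ 2) ^ (1 + β * lam₂ / 2) :=
          Real.rpow_le_rpow hV0 (hVup x) hα₂pos.le
      _ = k₂ ^ (1 + β * lam₂ / 2) * (‖x‖ ^ (2:ℝ)) ^ (1 + β * lam₂ / 2) := by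
          rw [Real.mul_rpow hk₂.le (by positivity), hr2]
      _ = k₂ ^ (1 + β * lam₂ / 2) * ‖x‖ ^ (2 + β * lam₂) := by
          rw [← Real.rpow_mul hr0.le]; ring_nf
  -- lower bounds on ‖F x‖ powers
  have hfneg : L ^ (-lam₁) * ‖x‖ ^ (-lam₁) ≤ ‖F x‖ ^ (-lam₁) := by
    rw [← Real.mul_rpow hL.le hr0.le]
    exact Real.rpow_le_rpow_of_nonpos hf0 hFle (by linarith)
  have hfpos : m ^ lam₂ * ‖x‖ ^ (β * lam₂) ≤ ‖F x‖ ^ lam₂ := by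
    have : (m * ‖x‖ ^ β) ^ lam₂ ≤ ‖F x‖ ^ lam₂ :=
      Real.rpow_le_rpow (by positivity) (hFlow x) hlam₂.le
    calc m ^ lam₂ * ‖x‖ ^ (β * lam₂) = (m * ‖x‖ ^ β) ^ lam₂ := by
          rw [Real.mul_rpow hm.le (by positivity), Real.rpow_mul hr0.le]
      _ ≤ ‖F x‖ ^ lam₂ := this
  -- key term bounds
  have key1 : (k₃ * η₁ / (L ^ lam₁ * k₂ ^ (1 - lam₁ / 2))) * V x ^ (1 - lam₁ / 2)
      ≤ k₃ * η₁ * (‖F x‖ ^ (-lam₁) * ‖x‖ ^ (2:ℕ)) := by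
    have hLp : (0:ℝ) < L ^ lam₁ := Real.rpow_pos_of_pos hL _
    have hk2p : (0:ℝ) < k₂ ^ (1 - lam₁ / 2) := Real.rpow_pos_of_pos hk₂ _
    have h1 : (k₃ * η₁ / (L ^ lam₁ * k₂ ^ (1 - lam₁ / 2))) * V x ^ (1 - lam₁ / 2)
        ≤ (k₃ * η₁ / (L ^ lam₁ * k₂ ^ (1 - lam₁ / 2))) *
          (k₂ ^ (1 - lam₁ / 2) * ‖x‖ ^ (2 - lam₁)) :=
      mul_le_mul_of_nonneg_left hVb1 (by positivity)
    refine h1.trans ?_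
    have h2 : (k₃ * η₁ / (L ^ lam₁ * k₂ ^ (1 - lam₁ / 2))) *
          (k₂ ^ (1 - lam₁ / 2) * ‖x‖ ^ (2 - lam₁))
        = k₃ * η₁ * (L ^ (-lam₁) * ‖x‖ ^ (2 - lam₁)) := by
      rw [Real.rpow_neg hL.le]
      field_simp
    rw [h2]
    have h3 : L ^ (-lam₁) * ‖x‖ ^ (2 - lam₁)
        = (L ^ (-lam₁) * ‖x‖ ^ (-lam₁)) * ‖x‖ ^ (2:ℕ) := by
      rw [hr2, mul_assoc, ← Real.rpow_add hr0]; ring_nf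
    rw [h3]
    have := mul_le_mul_of_nonneg_right hfneg (by positivity : (0:ℝ) ≤ ‖x‖ ^ (2:ℕ))
    exact mul_le_mul_of_nonneg_left this (by positivity)
  have key2 : (k₃ * η₂ * m ^ lam₂ / k₂ ^ (1 + β * lam₂ / 2)) * V x ^ (1 + β * lam₂ / 2)
      ≤ k₃ * η₂ * (‖F x‖ ^ lam₂ * ‖x‖ ^ (2:ℕ)) := by
    have hk2p : (0:ℝ) < k₂ ^ (1 + β * lam₂ / 2) := Real.rpow_pos_of_pos hk₂ _
    have h1 : (k₃ * η₂ * m ^ lam₂ / k₂ ^ (1 + β * lam₂ / 2)) * V x ^ (1 + β * lam₂ / 2)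
        ≤ (k₃ * η₂ * m ^ lam₂ / k₂ ^ (1 + β * lam₂ / 2)) *
          (k₂ ^ (1 + β * lam₂ / 2) * ‖x‖ ^ (2 + β * lam₂)) :=
      mul_le_mul_of_nonneg_left hVb2 (by positivity)
    refine h1.trans ?_
    have h2 : (k₃ * η₂ * m ^ lam₂ / k₂ ^ (1 + β * lam₂ / 2)) *
          (k₂ ^ (1 + β * lam₂ / 2) * ‖x‖ ^ (2 + β * lam₂))
        = k₃ * η₂ * (m ^ lam₂ * ‖x‖ ^ (2 + β * lam₂)) := by
      field_simp
    rw [h2]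
    have h3 : m ^ lam₂ * ‖x‖ ^ (2 + β * lam₂)
        = (m ^ lam₂ * ‖x‖ ^ (β * lam₂)) * ‖x‖ ^ (2:ℕ) := by
      rw [hr2, mul_assoc, ← Real.rpow_add hr0]; ring_nf
    rw [h3]
    have := mul_le_mul_of_nonneg_right hfpos (by positivity : (0:ℝ) ≤ ‖x‖ ^ (2:ℕ))
    exact mul_le_mul_of_nonneg_left this (by positivity)
  -- main computation
  rw [real_inner_smul_right]
  have hσ : 0 ≤ η₁ * ‖F x‖ ^ (-lam₁) + η₂ * ‖F x‖ ^ lam₂ := by positivity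
  have h1 : (η₁ * ‖F x‖ ^ (-lam₁) + η₂ * ‖F x‖ ^ lam₂) * ⟪gradV x, F x⟫ ≤
      (η₁ * ‖F x‖ ^ (-lam₁) + η₂ * ‖F x‖ ^ lam₂) * (-k₃ * ‖x‖ ^ 2) :=
    mul_le_mul_of_nonneg_left (hdec x) hσ
  refine h1.trans ?_
  have heq : (η₁ * ‖F x‖ ^ (-lam₁) + η₂ * ‖F x‖ ^ lam₂) * (-k₃ * ‖x‖ ^ 2)
      = -(k₃ * η₁ * (‖F x‖ ^ (-lam₁) * ‖x‖ ^ (2:ℕ)))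
        - k₃ * η₂ * (‖F x‖ ^ lam₂ * ‖x‖ ^ (2:ℕ)) := by ring
  rw [heq]
  linarith [key1, key2]
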